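/- arXiv:2007.08321 — 7 statements merged into one kernel-verified Lean document; each statement's English description precedes it below -/
import Mathlib

section
/- Let φ : 𝒯 → [0,∞) be such that ψ(z) := φ(z,z) is continuously differentiable on [0,∞); for every z > 0 the map y ↦ φ(y,z) is continuously differentiable, non-decreasing and convex on [0,z]; and ∂_yφ(z,z) = ψ'(z) for every z > 0. If δ̄ < +∞, then φ is constant on {(y,z) ∈ 𝒯 : z ≥ δ̄}, and more precisely φ(y,z) = ψ(δ̄) for every (y,z) ∈ 𝒯 with z ≥ δ̄. -/
open Set

/-- If `δ̄ < +∞` (i.e. the set `S` defining `δ̄` as its infimum is nonempty), then the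
loading–unloading density `φ` is constant, equal to `ψ(δ̄) = φ(δ̄,δ̄)`, on the part of
`𝒯 = {(y,z) : 0 ≤ y ≤ z}` where `z ≥ δ̄`. -/
theorem stmt_0
    (φ : ℝ → ℝ → ℝ) (ψ' : ℝ → ℝ) (φy : ℝ → ℝ → ℝ)
    -- φ maps 𝒯 into [0,∞)
    (hφ_nonneg : ∀ y z : ℝ, 0 ≤ y → y ≤ z → 0 ≤ φ y z)
    -- ψ(z) := φ(z,z) is C¹ on [0,∞), with derivative ψ'
    (hψ : ∀ z ∈ Ici (0:ℝ), HasDerivWithinAt (fun w => φ w w) (ψ' z) (Ici 0) z)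
    (hψ'cont : ContinuousOn ψ' (Ici 0))
    -- for every z > 0, y ↦ φ(y,z) is C¹ on [0,z] with derivative φy(·,z),
    -- non-decreasing and convex there
    (hφy : ∀ z : ℝ, 0 < z → ∀ y ∈ Icc (0:ℝ) z,
      HasDerivWithinAt (fun w => φ w z) (φy y z) (Icc 0 z) y)
    (hφycont : ∀ z : ℝ, 0 < z → ContinuousOn (fun y => φy y z) (Icc 0 z))
    (hmono : ∀ z : ℝ, 0 < z → MonotoneOn (fun y => φ y z) (Icc 0 z))
    (hconv : ∀ z : ℝ, 0 < z → ConvexOn ℝ (Icc 0 z) (fun y => φ y z))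
    -- ∂_yφ(z,z) = ψ'(z) for every z > 0
    (hdiag : ∀ z : ℝ, 0 < z → φy z z = ψ' z)
    -- S is the set whose infimum defines δ̄; S nonempty means δ̄ < +∞
    (S : Set ℝ)
    (hS_def : S = {z : ℝ | 0 < z ∧ ∀ z₁ z₂ : ℝ, z ≤ z₁ → z ≤ z₂ → φ z₁ z₁ = φ z₂ z₂})
    (hS_ne : S.Nonempty) :
    ∀ y z : ℝ, 0 ≤ y → y ≤ z → sInf S ≤ z → φ y z = φ (sInf S) (sInf S) := by
  set δ := sInf S with hδ
  have hSbd : BddBelow S := ⟨0, fun s hs => by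
    rw [hS_def] at hs; exact hs.1.le⟩
  have hδ0 : 0 ≤ δ := le_csInf hS_ne (fun s hs => by rw [hS_def] at hs; exact hs.1.le)
  -- ψ is constant on (δ, ∞)
  have hconst : ∀ z₁ z₂ : ℝ, δ < z₁ → δ < z₂ → φ z₁ z₁ = φ z₂ z₂ := by
    intro z₁ z₂ h1 h2
    obtain ⟨s, hs, hslt⟩ := (csInf_lt_iff hSbd hS_ne).1 (lt_min h1 h2)
    rw [hS_def] at hs
    exact hs.2 z₁ z₂ (hslt.le.trans (min_le_left _ _)) (hslt.le.trans (min_le_right _ _))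
  -- ψ continuous on Ici 0
  have hψcont : ContinuousOn (fun w => φ w w) (Ici 0) :=
    fun z hz => (hψ z hz).continuousWithinAt
  -- ψ z = ψ δ for all z ≥ δ
  have hconstδ : ∀ z : ℝ, δ ≤ z → φ z z = φ δ δ := by
    intro z hz
    rcases eq_or_lt_of_le hz with rfl | hz'
    · rfl
    · have hc : Filter.Tendsto (fun w => φ w w) (nhdsWithin δ (Ioi δ)) (nhds (φ δ δ)) := by
        refine ((hψcont δ (mem_Ici.2 hδ0)).tendsto).mono_left (nhdsWithin_mono δ ?_)
        intro w hw
        exact hδ0.trans (le_of_lt hw)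
      have hc' : Filter.Tendsto (fun w => φ w w) (nhdsWithin δ (Ioi δ)) (nhds (φ z z)) := by
        apply Filter.Tendsto.congr' _ tendsto_const_nhds
        filter_upwards [self_mem_nhdsWithin] with w hw
        exact (hconst z w hz' hw).symm ▸ (hconst w z hw hz')
      exact tendsto_nhds_unique hc' hc
  intro y z hy hyz hδz
  rcases eq_or_lt_of_le (hδ0.trans (hδz)) with rfl | hzpos
  · -- z = 0, so y = 0 and δ = 0
    have : y = 0 := le_antisymm hyz hy
    have hδeq : δ = 0 := le_antisymm hδz hδ0
    rw [this, hδeq]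
  · -- z > 0
    -- ψ' z = 0
    have hz0 : (0:ℝ) < z := hzpos
    have hψ'z : ψ' z = 0 := by
      have h1 : HasDerivWithinAt (fun w => φ w w) (ψ' z) (Ici δ) z :=
        (hψ z (mem_Ici.2 hz0.le)).mono (fun w hw => hδ0.trans hw)
      have h2 : HasDerivWithinAt (fun w => φ w w) 0 (Ici δ) z := by
        apply (hasDerivWithinAt_const z (Ici δ) (φ δ δ)).congr
        · intro w hw; exact hconstδ w hw
        · exact hconstδ z hδz
      have hu : UniqueDiffWithinAt ℝ (Ici δ) z := uniqueDiffOn_Ici δ z hδz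
      have := h1.derivWithin hu
      rw [h2.derivWithin hu] at this
      exact this.symm
    have hφyz : φy z z = 0 := (hdiag z hz0).trans hψ'z
    -- φ y z = φ z z
    have key : φ y z = φ z z := by
      rcases eq_or_lt_of_le hyz with rfl | hylt
      · rfl
      · have hmem_y : y ∈ Icc (0:ℝ) z := ⟨hy, hyz⟩
        have hmem_z : z ∈ Icc (0:ℝ) z := ⟨hz0.le, le_rfl⟩
        have hle : φ y z ≤ φ z z := hmono z hz0 hmem_y hmem_z hyz
        have hslope : slope (fun w => φ w z) y z ≤ φy z z :=
          (hconv z hz0).slope_le_of_hasDerivWithinAt hmem_y hmem_z hylt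
            (hφy z hz0 z hmem_z)
        rw [hφyz, slope_def_field] at hslope
        have : φ z z - φ y z ≤ 0 := by
          have hzy : 0 < z - y := sub_pos.2 hylt
          have := (div_nonpos_iff.1 hslope)
          rcases this with ⟨h1, h2⟩ | ⟨h1, h2⟩
          · linarith
          · linarith
        linarith
    rw [key]
    exact hconstδ z hδz
end

section
/- Let φ : 𝒯 → [0,∞) be such that ψ(z) := φ(z,z) is continuously differentiable on [0,∞); for every z > 0 the map y ↦ φ(y,z) is continuously differentiable, non-decreasing and convex on [0,z]; and ∂_yφ(z,z) = ψ'(z) for every z > 0. Then φ(y,z) = φ(min(y,δ̄), min(z,δ̄)) for every (y,z) ∈ 𝒯 (the identity being trivial when δ̄ = +∞, where min with +∞ is the identity). -/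
open Set Filter Topology

open Classical in
/-- `φ(y,z) = φ(min(y,δ̄), min(z,δ̄))` on `𝒯 = {(y,z) : 0 ≤ y ≤ z}`, where
`δ̄ = inf S` with the convention `inf ∅ = +∞` (so if `S = ∅` the minima with `+∞`
are the identity and the claim is trivial). -/
theorem stmt_1
    (φ : ℝ → ℝ → ℝ) (ψ' : ℝ → ℝ) (φy : ℝ → ℝ → ℝ)
    -- φ maps 𝒯 into [0,∞)
    (hφ_nonneg : ∀ y z : ℝ, 0 ≤ y → y ≤ z → 0 ≤ φ y z)
    -- ψ(z) := φ(z,z) is C¹ on [0,∞), with derivative ψ'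
    (hψ : ∀ z ∈ Ici (0:ℝ), HasDerivWithinAt (fun w => φ w w) (ψ' z) (Ici 0) z)
    (hψ'cont : ContinuousOn ψ' (Ici 0))
    -- for every z > 0, y ↦ φ(y,z) is C¹ on [0,z] with derivative φy(·,z),
    -- non-decreasing and convex there
    (hφy : ∀ z : ℝ, 0 < z → ∀ y ∈ Icc (0:ℝ) z,
      HasDerivWithinAt (fun w => φ w z) (φy y z) (Icc 0 z) y)
    (hφycont : ∀ z : ℝ, 0 < z → ContinuousOn (fun y => φy y z) (Icc 0 z))
    (hmono : ∀ z : ℝ, 0 < z → MonotoneOn (fun y => φ y z) (Icc 0 z))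
    (hconv : ∀ z : ℝ, 0 < z → ConvexOn ℝ (Icc 0 z) (fun y => φ y z))
    -- ∂_yφ(z,z) = ψ'(z) for every z > 0
    (hdiag : ∀ z : ℝ, 0 < z → φy z z = ψ' z)
    -- S is the set whose infimum defines δ̄ (δ̄ = +∞ exactly when S = ∅)
    (S : Set ℝ)
    (hS_def : S = {z : ℝ | 0 < z ∧ ∀ z₁ z₂ : ℝ, z ≤ z₁ → z ≤ z₂ → φ z₁ z₁ = φ z₂ z₂}) :
    ∀ y z : ℝ, 0 ≤ y → y ≤ z →
      φ y z = φ (if S.Nonempty then min y (sInf S) else y)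
                (if S.Nonempty then min z (sInf S) else z) := by
  -- key : φ(·,w) is constant on [0,w] for w ∈ S
  have key : ∀ w ∈ S, ∀ y', 0 ≤ y' → y' ≤ w → φ y' w = φ w w := by
    intro w hw y' hy'0 hy'w
    have hw' := hw
    rw [hS_def] at hw'
    have hw0 : 0 < w := hw'.1
    -- ψ' w = 0, by uniqueness of derivative on Ici w where ψ is constant
    have hconstIci : EqOn (fun t => φ t t) (fun _ => φ w w) (Ici w) := fun t ht =>
      hw'.2 t w ht le_rfl
    have hd1 : HasDerivWithinAt (fun t => φ t t) (ψ' w) (Ici w) w :=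
      (hψ w hw0.le).mono (fun t ht => le_trans hw0.le ht)
    have hd2 : HasDerivWithinAt (fun t => φ t t) 0 (Ici w) w :=
      (hasDerivWithinAt_const w (Ici w) (φ w w)).congr hconstIci (hconstIci self_mem_Ici)
    have hψ'w : ψ' w = 0 := (uniqueDiffOn_Ici w w self_mem_Ici).eq_deriv _ hd1 hd2
    rcases eq_or_lt_of_le hy'w with heq | hlt
    · rw [heq]
    -- monotone gives ≤
    have hle : φ y' w ≤ φ w w :=
      hmono w hw0 ⟨hy'0, hy'w⟩ ⟨hw0.le, le_rfl⟩ hy'w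
    -- convexity + zero derivative at the right endpoint gives ≥
    have hderiv0 : HasDerivWithinAt (fun t => φ t w) 0 (Icc 0 w) w := by
      have := hφy w hw0 w ⟨hw0.le, le_rfl⟩
      rwa [hdiag w hw0, hψ'w] at this
    have htend : Tendsto (slope (fun t => φ t w) w) (𝓝[Icc 0 w \ {w}] w) (𝓝 0) :=
      hasDerivWithinAt_iff_tendsto_slope.mp hderiv0
    have hsub : Ioo y' w ⊆ Icc 0 w \ {w} := fun t ht =>
      ⟨⟨le_trans hy'0 ht.1.le, ht.2.le⟩, ne_of_lt ht.2⟩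
    have htend' : Tendsto (slope (fun t => φ t w) w) (𝓝[Ioo y' w] w) (𝓝 0) :=
      htend.mono_left (nhdsWithin_mono _ hsub)
    have hnebot : (𝓝[Ioo y' w] w).NeBot := right_nhdsWithin_Ioo_neBot hlt
    have hwy : 0 < w - y' := by linarith
    have hslope_le : (φ w w - φ y' w) / (w - y') ≤ 0 := by
      refine ge_of_tendsto htend' ?_
      filter_upwards [self_mem_nhdsWithin] with t ht
      have hadj := (hconv w hw0).secant_mono_aux3 (x := y') (y := t) (z := w)
        ⟨hy'0, hy'w⟩ ⟨hw0.le, le_rfl⟩ ht.1 ht.2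
      have heq : slope (fun t => φ t w) w t = (φ w w - φ t w) / (w - t) := by
        rw [slope_comm, slope_def_field]
      rw [heq]
      exact hadj
    have h2 : φ w w - φ y' w ≤ 0 := by
      by_contra hcon
      push_neg at hcon
      have := div_pos hcon hwy
      linarith
    linarith
  intro y z hy hyz
  by_cases hne : S.Nonempty
  · simp only [if_pos hne]
    set δ := sInf S with hδ
    have hSpos : ∀ s ∈ S, 0 < s := by
      intro s hs; rw [hS_def] at hs; exact hs.1
    have hbdd : BddBelow S := ⟨0, fun s hs => (hSpos s hs).le⟩
    have hδ0 : 0 ≤ δ := le_csInf hne (fun s hs => (hSpos s hs).le)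
    -- ψ is constant on (δ, ∞)
    have hconst : ∀ t, δ < t → ∀ u, δ < u → φ t t = φ u u := by
      intro t ht u hu
      obtain ⟨s, hsS, hs⟩ := (csInf_lt_iff hbdd hne).mp (lt_min ht hu)
      rw [hS_def] at hsS
      exact hsS.2 t u (hs.le.trans (min_le_left _ _)) (hs.le.trans (min_le_right _ _))
    -- ψ δ = ψ w for all w ≥ δ, by continuity
    have hψδ : ∀ w, δ ≤ w → φ δ δ = φ w w := by
      intro w hw
      rcases eq_or_lt_of_le hw with rfl | hlt
      · rfl
      have hc : ContinuousWithinAt (fun t => φ t t) (Ioi δ) δ :=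
        ((hψ δ hδ0).continuousWithinAt).mono (fun t ht => le_of_lt (lt_of_le_of_lt hδ0 ht))
      have h1 : Tendsto (fun t => φ t t) (𝓝[>] δ) (𝓝 (φ δ δ)) := hc
      have h2 : Tendsto (fun t => φ t t) (𝓝[>] δ) (𝓝 (φ w w)) := by
        refine Tendsto.congr' ?_ tendsto_const_nhds
        filter_upwards [self_mem_nhdsWithin] with t ht
        exact (hconst t ht w hlt).symm
      exact tendsto_nhds_unique h1 h2
    -- every w > δ is in S
    have hmemS : ∀ w, δ < w → w ∈ S := by
      intro w hw
      rw [hS_def]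
      refine ⟨lt_of_le_of_lt hδ0 hw, fun z₁ z₂ h1 h2 => ?_⟩
      rw [← hψδ z₁ (hw.le.trans h1), ← hψδ z₂ (hw.le.trans h2)]
    rcases le_or_gt z δ with hzδ | hδz
    · rw [min_eq_left (hyz.trans hzδ), min_eq_left hzδ]
    · have hzS : z ∈ S := hmemS z hδz
      rw [min_eq_right hδz.le]
      have h1 : φ y z = φ z z := key z hzS y hy hyz
      rcases eq_or_lt_of_le hδ0 with heq | hδpos
      · -- δ = 0
        rw [← heq, min_eq_right hy, h1]
        have := hψδ z hδz.le
        rw [← heq] at this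
        rw [← this]
      · -- δ > 0 : δ ∈ S
        have hδS : δ ∈ S := by
          rw [hS_def]
          exact ⟨hδpos, fun z₁ z₂ h1 h2 => by rw [← hψδ z₁ h1, ← hψδ z₂ h2]⟩
        have h2 : φ (min y δ) δ = φ δ δ :=
          key δ hδS (min y δ) (le_min hy hδ0) (min_le_right _ _)
        rw [h1, h2, hψδ z hδz.le]
  · simp only [if_neg hne]
end

section
/- Let f, g ∈ ℝ with f ≥ |g|, and let φ : 𝒯 → [0,∞) satisfy: the function ψ(z) := φ(z,z) is differentiable on [0,∞); for every z > 0 the map y ↦ φ(y,z) is differentiable on [0,z]; and ∂_yφ(z,z) = ψ'(z) for every z > 0. Then for every v ∈ ℝ the one-sided limit lim_{h→0⁺} (φ(|g+hv|, max(f,|g+hv|)) − φ(|g|,f))/h exists and equals: ∂_yφ(|g|,f)·sgn(g)·v if f > |g| > 0; ψ'(|g|)·sgn(g)·v if f = |g| > 0; ∂_yφ(0,f)·|v| if f > |g| = 0; and ψ'(0)·|v| if f = |g| = 0; here sgn denotes the signum function. -/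
open Set Filter Topology

/-- One-sided limit of `h ↦ (φ(|g+hv|, max(f,|g+hv|)) − φ(|g|,f))/h` as `h → 0⁺`
(Lemma on the derivative of the cohesive energy density along a variation). -/
theorem stmt_2
    (φ : ℝ → ℝ → ℝ) (ψ' : ℝ → ℝ) (φy : ℝ → ℝ → ℝ)
    -- φ maps 𝒯 into [0,∞)
    (hφ_nonneg : ∀ y z : ℝ, 0 ≤ y → y ≤ z → 0 ≤ φ y z)
    -- ψ(z) := φ(z,z) is differentiable on [0,∞) with derivative ψ'
    (hψ : ∀ z ∈ Ici (0:ℝ), HasDerivWithinAt (fun w => φ w w) (ψ' z) (Ici 0) z)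
    -- for every z > 0, y ↦ φ(y,z) is differentiable on [0,z] with derivative φy(·,z)
    (hφy : ∀ z : ℝ, 0 < z → ∀ y ∈ Icc (0:ℝ) z,
      HasDerivWithinAt (fun w => φ w z) (φy y z) (Icc 0 z) y)
    -- ∂_yφ(z,z) = ψ'(z) for every z > 0
    (hdiag : ∀ z : ℝ, 0 < z → φy z z = ψ' z)
    (f g : ℝ) (hfg : |g| ≤ f) :
    ∀ v : ℝ,
      Tendsto (fun h : ℝ => (φ |g + h * v| (max f |g + h * v|) - φ |g| f) / h)
        (nhdsWithin 0 (Ioi 0))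
        (nhds (if 0 < |g| then
                 (if f = |g| then ψ' |g| else φy |g| f) * Real.sign g * v
               else
                 (if f = 0 then ψ' 0 else φy 0 f) * |v|)) := by
  intro v
  have hf0 : (0:ℝ) ≤ f := le_trans (abs_nonneg g) hfg
  set G : ℝ → ℝ := fun y => φ y (max f y) with hGdef
  set u : ℝ → ℝ := fun h => |g + h * v| with hudef
  have hu0 : u 0 = |g| := by simp [hudef]
  have hG_at : G |g| = φ |g| f := by simp [hGdef, max_eq_left hfg]
  rcases eq_or_ne g 0 with hg | hg
  · -- g = 0
    subst hg
    have hGd : HasDerivWithinAt G (if f = 0 then ψ' 0 else φy 0 f) (Ici 0) 0 := by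
      rcases eq_or_ne f 0 with hf | hf
      · subst hf
        simp only [if_pos rfl]
        refine (hψ 0 (mem_Ici.mpr le_rfl)).congr (fun y hy => ?_) ?_
        · simp [hGdef, max_eq_right (mem_Ici.mp hy)]
        · simp [hGdef]
      · have hfpos : 0 < f := lt_of_le_of_ne hf0 (Ne.symm hf)
        simp only [if_neg hf]
        have h1 : HasDerivWithinAt G (φy 0 f) (Icc 0 f) 0 := by
          refine (hφy f hfpos 0 ⟨le_rfl, hf0⟩).congr (fun y hy => ?_) ?_
          · simp [hGdef, max_eq_left hy.2]
          · simp [hGdef, max_eq_left hf0]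
        refine h1.mono_of_mem_nhdsWithin ?_
        rw [← Ici_inter_Iic]
        exact inter_mem self_mem_nhdsWithin
          (mem_nhdsWithin_of_mem_nhds (Iic_mem_nhds hfpos))
    have hud : HasDerivWithinAt u |v| (Ici 0) 0 := by
      refine (hasDerivAt_mul_const (|v|)).hasDerivWithinAt.congr (fun h hh => ?_) ?_
      · simp [hudef, abs_mul, abs_of_nonneg (mem_Ici.mp hh)]
      · simp [hudef]
    have hmaps : MapsTo u (Ici 0) (Ici 0) := fun h _ => mem_Ici.mpr (abs_nonneg _)
    have hu00 : u 0 = 0 := by simp [hudef]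
    have hcomp : HasDerivWithinAt (G ∘ u)
        ((if f = 0 then ψ' 0 else φy 0 f) * |v|) (Ici 0) 0 := by
      refine HasDerivWithinAt.comp 0 ?_ hud hmaps
      rwa [hu00]
    have hslope := hasDerivWithinAt_iff_tendsto_slope.mp hcomp
    rw [Ici_sdiff_left] at hslope
    rw [if_neg (by simp)]
    refine hslope.congr fun h => ?_
    simp [slope_def_field, Function.comp, hGdef, hudef, max_eq_left hf0]
  · -- g ≠ 0
    have hgpos : 0 < |g| := abs_pos.mpr hg
    have hud : HasDerivAt u (Real.sign g * v) 0 := by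
      rcases hg.lt_or_gt with hlt | hlt
      · have hev : ∀ᶠ h in 𝓝 (0:ℝ), g + h * v < 0 := by
          have hc : Continuous fun h : ℝ => g + h * v := by continuity
          have := (hc.tendsto 0).eventually (eventually_lt_nhds (by simpa using hlt))
          simpa using this
        have hbase : HasDerivAt (fun h : ℝ => -(g + h * v)) (-v) 0 :=
          (((hasDerivAt_mul_const v).const_add g).neg)
        have : HasDerivAt u (-v) 0 :=
          hbase.congr_of_eventuallyEq (hev.mono fun h hh => abs_of_neg hh)
        rw [Real.sign_of_neg hlt]
        simpa using this
      · have hev : ∀ᶠ h in 𝓝 (0:ℝ), 0 < g + h * v := by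
          have hc : Continuous fun h : ℝ => g + h * v := by continuity
          have := (hc.tendsto 0).eventually (eventually_gt_nhds (by simpa using hlt))
          simpa using this
        have hbase : HasDerivAt (fun h : ℝ => g + h * v) v 0 :=
          ((hasDerivAt_mul_const v).const_add g)
        have : HasDerivAt u v 0 :=
          hbase.congr_of_eventuallyEq (hev.mono fun h hh => abs_of_pos hh)
        rw [Real.sign_of_pos hlt]
        simpa using this
    have hGd : HasDerivAt G (if f = |g| then ψ' |g| else φy |g| f) |g| := by
      rcases eq_or_ne f (|g|) with hfe | hfe
      · simp only [if_pos hfe]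
        have hL0 : HasDerivWithinAt (fun w => φ w |g|) (ψ' |g|) (Icc 0 |g|) |g| := by
          have := hφy |g| hgpos |g| ⟨abs_nonneg g, le_rfl⟩
          rwa [hdiag |g| hgpos] at this
        have hmem : Icc (0:ℝ) |g| ∈ 𝓝[Iic |g|] |g| := by
          rw [← Ici_inter_Iic]
          exact inter_mem (mem_nhdsWithin_of_mem_nhds (Ici_mem_nhds hgpos))
            self_mem_nhdsWithin
        have hL : HasDerivWithinAt G (ψ' |g|) (Iic |g|) |g| := by
          refine (hL0.mono_of_mem_nhdsWithin hmem).congr (fun y hy => ?_) ?_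
          · simp [hGdef, hfe, max_eq_left (mem_Iic.mp hy)]
          · simp [hGdef, hfe]
        have hR : HasDerivWithinAt G (ψ' |g|) (Ici |g|) |g| := by
          refine ((hψ |g| (abs_nonneg g)).mono
            (Ici_subset_Ici.mpr (abs_nonneg g))).congr (fun y hy => ?_) ?_
          · simp [hGdef, hfe, max_eq_right (mem_Ici.mp hy)]
          · simp [hGdef, hfe]
        have := hL.union hR
        rw [Iic_union_Ici] at this
        exact hasDerivWithinAt_univ.mp this
      · have hlt : |g| < f := lt_of_le_of_ne hfg fun h => hfe h.symm
        have hfpos : 0 < f := lt_of_le_of_lt (abs_nonneg g) hlt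
        simp only [if_neg hfe]
        have h1 : HasDerivAt (fun w => φ w f) (φy |g| f) |g| :=
          (hφy f hfpos |g| ⟨abs_nonneg g, hfg⟩).hasDerivAt (Icc_mem_nhds hgpos hlt)
        refine h1.congr_of_eventuallyEq ?_
        filter_upwards [Iio_mem_nhds hlt] with y hy
        simp [hGdef, max_eq_left (le_of_lt (mem_Iio.mp hy))]
    have hcomp : HasDerivAt (G ∘ u)
        ((if f = |g| then ψ' |g| else φy |g| f) * (Real.sign g * v)) 0 := by
      refine HasDerivAt.comp 0 ?_ hud
      rwa [hu0]
    have hslope := hasDerivAt_iff_tendsto_slope.mp hcomp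
    have hmono : 𝓝[Ioi (0:ℝ)] 0 ≤ 𝓝[{(0:ℝ)}ᶜ] 0 :=
      nhdsWithin_mono 0 fun x hx => ne_of_gt hx
    rw [if_pos hgpos, mul_assoc]
    refine (hslope.mono_left hmono).congr fun h => ?_
    simp [slope_def_field, Function.comp, hGdef, hudef, max_eq_left hfg]
end

section
/- Let T, L > 0 and let (f_n) be a sequence of functions from [0,T] to C⁰([0,L];ℝ) which are non-decreasing in time, i.e. for every n and every 0 ≤ s ≤ t ≤ T one has f_n(s,x) ≤ f_n(t,x) for all x ∈ [0,L]. Assume the families {f_n(0)}_n and {f_n(T)}_n are equibounded (in sup norm), and the family {f_n(t) : n ∈ ℕ, t ∈ [0,T]} is equicontinuous on [0,L]. Then there exist a subsequence (not relabelled) and a function f : [0,T] → C⁰([0,L];ℝ), non-decreasing in time in the same sense, such that for every t ∈ [0,T] the sequence f_n(t) converges to f(t) uniformly on [0,L] as n → ∞; moreover the family {f(t)}_{t∈[0,T]} is equicontinuous. -/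
open Set Filter Topology

/-- Pointwise subsequence extraction over a countable index from a bounded family. -/
lemma extract_ptwise {I : Type*} [Countable I] (C : ℝ) (v : ℕ → I → ℝ)
    (hv : ∀ n i, v n i ∈ Icc (-C) C) :
    ∃ σ : ℕ → ℕ, StrictMono σ ∧ ∀ i, ∃ l : ℝ,
      Tendsto (fun k => v (σ k) i) atTop (𝓝 l) := by
  set w : ℕ → I → Icc (-C) C := fun n i => ⟨v n i, hv n i⟩ with hw
  obtain ⟨a, -, σ, hσ, ha⟩ :=
    (isCompact_univ : IsCompact (univ : Set (I → Icc (-C) C))).tendsto_subseq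
      (fun n => mem_univ (w n))
  refine ⟨σ, hσ, fun i => ⟨a i, ?_⟩⟩
  have h1 : Tendsto (fun k => w (σ k) i) atTop (𝓝 (a i)) :=
    ((continuous_apply i).tendsto a).comp ha
  exact (continuous_subtype_val.tendsto (a i)).comp h1

/-- If a sequence of continuous functions on `[0,L]` is equicontinuous and pointwise Cauchy
on a dense set, it converges in `C([0,L])`. -/
lemma lim_of_dense {L : ℝ} (X0 : Set (Icc (0:ℝ) L)) (hX0 : Dense X0)
    (u : ℕ → C(Icc (0:ℝ) L, ℝ))
    (hequi : ∀ ε : ℝ, 0 < ε → ∃ δ : ℝ, 0 < δ ∧ ∀ k : ℕ, ∀ x y : Icc (0:ℝ) L,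
      dist x y < δ → |u k x - u k y| < ε)
    (hconv : ∀ x ∈ X0, CauchySeq (fun k => u k x)) :
    ∃ g : C(Icc (0:ℝ) L, ℝ), Tendsto u atTop (𝓝 g) := by
  have hc : CauchySeq u := by
    rw [Metric.cauchySeq_iff]
    intro ε hε
    obtain ⟨δ, hδ, hδ'⟩ := hequi (ε/4) (by positivity)
    have hcov : (univ : Set (Icc (0:ℝ) L)) ⊆ ⋃ x ∈ X0, Metric.ball x δ := by
      intro x _
      obtain ⟨y, hy, hxy⟩ := Metric.mem_closure_iff.1 (hX0 x) δ hδ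
      exact mem_iUnion₂.2 ⟨y, hy, Metric.mem_ball.2 hxy⟩
    obtain ⟨s, hsX0, hsfin, hscov⟩ :=
      isCompact_univ.elim_finite_subcover_image (fun x _ => Metric.isOpen_ball) hcov
    have key : ∀ᶠ p : ℕ × ℕ in atTop ×ˢ atTop,
        ∀ x ∈ s, |u p.1 x - u p.2 x| < ε/4 := by
      rw [hsfin.eventually_all]
      intro x hx
      obtain ⟨N, hN⟩ := Metric.cauchySeq_iff.1 (hconv x (hsX0 hx)) (ε/4) (by positivity)
      filter_upwards [(eventually_ge_atTop N).prod_mk (eventually_ge_atTop N)] with p hp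
      have := hN p.1 hp.1 p.2 hp.2
      rwa [Real.dist_eq] at this
    obtain ⟨pa, hpa, pb, hpb, hkey⟩ := eventually_prod_iff.1 key
    obtain ⟨N1, hN1⟩ := eventually_atTop.1 hpa
    obtain ⟨N2, hN2⟩ := eventually_atTop.1 hpb
    refine ⟨max N1 N2, fun m hm n hn => ?_⟩
    have hmn : ∀ x ∈ s, |u m x - u n x| < ε/4 :=
      hkey (hN1 m (le_trans (le_max_left _ _) hm)) (hN2 n (le_trans (le_max_right _ _) hn))
    have hle : dist (u m) (u n) ≤ 3*(ε/4) := by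
      refine ContinuousMap.dist_le (by positivity) |>.2 fun x => ?_
      obtain ⟨x0, hx0s, hxx0⟩ := mem_iUnion₂.1 (hscov (mem_univ x))
      have hd : dist x x0 < δ := Metric.mem_ball.1 hxx0
      have h1 := hδ' m x x0 hd
      have h2 := hδ' n x x0 hd
      have h3 := hmn x0 hx0s
      rw [Real.dist_eq]
      have heq : u m x - u n x = (u m x - u m x0) + (u m x0 - u n x0) + (u n x0 - u n x) := by
        ring
      rw [heq]
      have h2' : |u n x0 - u n x| < ε/4 := by rwa [abs_sub_comm]
      calc |(u m x - u m x0) + (u m x0 - u n x0) + (u n x0 - u n x)|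
          ≤ |(u m x - u m x0) + (u m x0 - u n x0)| + |u n x0 - u n x| := abs_add_le _ _
        _ ≤ |u m x - u m x0| + |u m x0 - u n x0| + |u n x0 - u n x| := by
            gcongr; exact abs_add_le _ _
        _ ≤ 3*(ε/4) := by linarith [le_of_lt h1, le_of_lt h3, le_of_lt h2']
    linarith
  exact cauchySeq_tendsto_of_complete hc


/-- Helly-type selection theorem for sequences of functions `[0,T] → C⁰([0,L];ℝ)` that are
non-decreasing in time, with `{fₙ(0)}`, `{fₙ(T)}` equibounded and `{fₙ(t)}` equicontinuous
uniformly in `t`: a subsequence converges, for every `t`, uniformly on `[0,L]` to a limit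
`F(t)`, `F` is non-decreasing in time, and `{F(t)}` is equicontinuous. -/
theorem stmt_4
    (T L : ℝ) (hT : 0 < T) (hL : 0 < L)
    (f : ℕ → ℝ → C(Icc (0:ℝ) L, ℝ))
    -- non-decreasing in time
    (hmono : ∀ n : ℕ, ∀ s t : ℝ, 0 ≤ s → s ≤ t → t ≤ T →
      ∀ x : Icc (0:ℝ) L, f n s x ≤ f n t x)
    -- equiboundedness of {fₙ(0)} and {fₙ(T)}
    (hbdd : ∃ C : ℝ, ∀ n : ℕ, ‖f n 0‖ ≤ C ∧ ‖f n T‖ ≤ C)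
    -- equicontinuity, uniform with respect to t ∈ [0,T]
    (hequi : ∀ ε : ℝ, 0 < ε → ∃ δ : ℝ, 0 < δ ∧ ∀ n : ℕ, ∀ t ∈ Icc (0:ℝ) T,
      ∀ x y : Icc (0:ℝ) L, dist x y < δ → |f n t x - f n t y| < ε) :
    ∃ σ : ℕ → ℕ, StrictMono σ ∧ ∃ F : ℝ → C(Icc (0:ℝ) L, ℝ),
      (∀ s t : ℝ, 0 ≤ s → s ≤ t → t ≤ T → ∀ x : Icc (0:ℝ) L, F s x ≤ F t x) ∧
      (∀ t ∈ Icc (0:ℝ) T, Tendsto (fun k => f (σ k) t) atTop (𝓝 (F t))) ∧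
      (∀ ε : ℝ, 0 < ε → ∃ δ : ℝ, 0 < δ ∧ ∀ t ∈ Icc (0:ℝ) T,
        ∀ x y : Icc (0:ℝ) L, dist x y < δ → |F t x - F t y| < ε) := by
  classical
  obtain ⟨C, hC⟩ := hbdd
  have hbound : ∀ n : ℕ, ∀ t ∈ Icc (0:ℝ) T, ∀ x : Icc (0:ℝ) L,
      f n t x ∈ Icc (-C) C := by
    intro n t ht x
    have h1 : f n 0 x ≤ f n t x := hmono n 0 t le_rfl ht.1 ht.2 x
    have h2 : f n t x ≤ f n T x := hmono n t T ht.1 ht.2 le_rfl x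
    have h3 : |f n 0 x| ≤ C := le_trans ((f n 0).norm_coe_le_norm x) (hC n).1
    have h4 : |f n T x| ≤ C := le_trans ((f n T).norm_coe_le_norm x) (hC n).2
    constructor
    · linarith [neg_abs_le (f n 0 x)]
    · linarith [le_abs_self (f n T x)]
  set Q : Set ℝ := (Set.range (fun q : ℚ => (q:ℝ)) ∩ Icc 0 T) ∪ {0, T} with hQdef
  have hQc : Q.Countable :=
    ((Set.countable_range _).mono inter_subset_left).union
      ((Set.countable_singleton T).insert 0)
  have hQsub : Q ⊆ Icc (0:ℝ) T := by
    rintro q (⟨-, hq⟩ | hq)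
    · exact hq
    · rcases hq with rfl | rfl
      · exact ⟨le_rfl, hT.le⟩
      · exact ⟨hT.le, le_rfl⟩
  have h0Q : (0:ℝ) ∈ Q := Or.inr (Or.inl rfl)
  have hTQ : T ∈ Q := Or.inr (Or.inr rfl)
  have hQdense : ∀ a b : ℝ, 0 ≤ a → b ≤ T → a < b → ∃ q ∈ Q, a < q ∧ q < b := by
    intro a b ha hb hab
    obtain ⟨q, hq1, hq2⟩ := exists_rat_btwn hab
    exact ⟨(q:ℝ), Or.inl ⟨⟨q, rfl⟩, ⟨le_trans ha hq1.le, le_trans hq2.le hb⟩⟩, hq1, hq2⟩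
  haveI : Countable Q := hQc.to_subtype
  obtain ⟨X0, hX0c, hX0d⟩ := TopologicalSpace.exists_countable_dense (Icc (0:ℝ) L)
  haveI : Countable X0 := hX0c.to_subtype
  -- first extraction: over Q × X0
  obtain ⟨σ₁, hσ₁, hlim1⟩ := extract_ptwise (I := Q × X0) C
    (fun n p => f n p.1 (p.2 : Icc (0:ℝ) L))
    (fun n p => hbound n p.1 (hQsub p.1.2) p.2)
  have hF0ex : ∀ q : Q, ∃ g : C(Icc (0:ℝ) L, ℝ),
      Tendsto (fun k => f (σ₁ k) q) atTop (𝓝 g) := by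
    intro q
    refine lim_of_dense X0 hX0d _ (fun ε hε => ?_) (fun x hx => ?_)
    · obtain ⟨δ, hδ, hδ'⟩ := hequi ε hε
      exact ⟨δ, hδ, fun k => hδ' (σ₁ k) q (hQsub q.2)⟩
    · obtain ⟨l, hl⟩ := hlim1 (q, ⟨x, hx⟩)
      exact hl.cauchySeq
  choose F₀ hF₀ using hF0ex
  have hpt : ∀ (u : ℕ → C(Icc (0:ℝ) L, ℝ)) (g : C(Icc (0:ℝ) L, ℝ)),
      Tendsto u atTop (𝓝 g) → ∀ x : Icc (0:ℝ) L,
        Tendsto (fun k => u k x) atTop (𝓝 (g x)) := by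
    intro u g h x
    exact ((continuous_eval_const x).tendsto g).comp h
  have hF₀mono : ∀ q1 q2 : Q, (q1:ℝ) ≤ (q2:ℝ) → ∀ x : Icc (0:ℝ) L,
      F₀ q1 x ≤ F₀ q2 x := by
    intro q1 q2 h x
    exact le_of_tendsto_of_tendsto' (hpt _ _ (hF₀ q1) x) (hpt _ _ (hF₀ q2) x)
      (fun k => hmono (σ₁ k) q1 q2 (hQsub q1.2).1 h (hQsub q2.2).2 x)
  have hF₀bdd : ∀ (q : Q) (x : Icc (0:ℝ) L), F₀ q x ∈ Icc (-C) C := by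
    intro q x
    constructor
    · exact le_of_tendsto_of_tendsto' tendsto_const_nhds (hpt _ _ (hF₀ q) x)
        (fun k => (hbound (σ₁ k) q (hQsub q.2) x).1)
    · exact le_of_tendsto_of_tendsto' (hpt _ _ (hF₀ q) x) tendsto_const_nhds
        (fun k => (hbound (σ₁ k) q (hQsub q.2) x).2)
  -- monotone envelopes
  set g : X0 → ℝ → ℝ := fun x t =>
    sSup ((fun q : Q => F₀ q x) '' {q : Q | (q:ℝ) ≤ max t 0}) with hgdef
  have hne : ∀ (x : X0) (t : ℝ),
      ((fun q : Q => F₀ q x) '' {q : Q | (q:ℝ) ≤ max t 0}).Nonempty := by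
    intro x t
    exact ⟨F₀ ⟨0, h0Q⟩ x, ⟨0, h0Q⟩, by simpa using le_max_right t 0, rfl⟩
  have hbdda : ∀ (x : X0) (t : ℝ),
      BddAbove ((fun q : Q => F₀ q x) '' {q : Q | (q:ℝ) ≤ max t 0}) := by
    intro x t
    refine ⟨C, ?_⟩
    rintro _ ⟨q, -, rfl⟩
    exact (hF₀bdd q x).2
  have hgm : ∀ x : X0, Monotone (g x) := by
    intro x s t hst
    refine csSup_le_csSup (hbdda x t) (hne x s) (image_mono ?_)
    intro q hq
    exact le_trans hq (max_le_max hst le_rfl)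
  have hgq : ∀ (x : X0) (q : Q), g x (q : ℝ) = F₀ q x := by
    intro x q
    have hmax : max (q:ℝ) 0 = (q:ℝ) := max_eq_left (hQsub q.2).1
    refine le_antisymm (csSup_le (hne x q) ?_) (le_csSup (hbdda x q) ?_)
    · rintro _ ⟨q', hq', rfl⟩
      rw [mem_setOf_eq, hmax] at hq'
      exact hF₀mono q' q hq' x
    · exact ⟨q, by rw [mem_setOf_eq, hmax], rfl⟩
  set D : Set ℝ := ⋃ x : X0, {t | ¬ContinuousAt (g x) t} with hDdef
  have hDc : D.Countable :=
    Set.countable_iUnion fun x => (hgm x).countable_not_continuousAt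
  haveI : Countable (D ∩ Icc (0:ℝ) T : Set ℝ) := (hDc.mono inter_subset_left).to_subtype
  -- second extraction: over (D ∩ [0,T]) × X0
  obtain ⟨σ₂, hσ₂, hlim2⟩ := extract_ptwise (I := (D ∩ Icc (0:ℝ) T : Set ℝ) × X0) C
    (fun n p => f (σ₁ n) p.1 (p.2 : Icc (0:ℝ) L))
    (fun n p => hbound (σ₁ n) p.1 p.1.2.2 p.2)
  refine ⟨σ₁ ∘ σ₂, hσ₁.comp hσ₂, ?_⟩
  have hptconv : ∀ t ∈ Icc (0:ℝ) T, ∀ x : X0, ∃ l : ℝ,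
      Tendsto (fun k => f (σ₁ (σ₂ k)) t (x : Icc (0:ℝ) L)) atTop (𝓝 l) := by
    intro t ht x
    by_cases hq : t ∈ Q
    · exact ⟨F₀ ⟨t, hq⟩ x, (hpt _ _ (hF₀ ⟨t, hq⟩) x).comp hσ₂.tendsto_atTop⟩
    by_cases hD : t ∈ D
    · exact hlim2 (⟨t, hD, ht⟩, x)
    · have hcont : ContinuousAt (g x) t := by
        by_contra h
        exact hD (mem_iUnion.2 ⟨x, h⟩)
      refine ⟨g x t, Metric.tendsto_atTop.2 fun ε hε => ?_⟩
      have htT : t < T := lt_of_le_of_ne ht.2 fun h => hq (h ▸ hTQ)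
      have hmax : max t 0 = t := max_eq_left ht.1
      have hlt : g x t - ε < g x t := by linarith
      obtain ⟨v, hvmem, hv⟩ := exists_lt_of_lt_csSup (hne x t) (by
        show g x t - ε < sSup _
        rw [hgdef] at hlt ⊢
        exact hlt)
      obtain ⟨q1, hq1le, rfl⟩ := hvmem
      rw [mem_setOf_eq, hmax] at hq1le
      obtain ⟨δ, hδpos, hδ⟩ := Metric.continuousAt_iff.1 hcont ε hε
      obtain ⟨q2, hq2Q, hq2l, hq2r⟩ := hQdense t (min (t + δ) T) ht.1 (min_le_right _ _)
        (lt_min (by linarith) htT)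
      have hq2close : dist (q2:ℝ) t < δ := by
        rw [Real.dist_eq, abs_of_pos (sub_pos.2 hq2l)]
        have := lt_of_lt_of_le hq2r (min_le_left _ _)
        linarith
      have hub : F₀ ⟨q2, hq2Q⟩ x < g x t + ε := by
        have h1 := hδ hq2close
        rw [Real.dist_eq] at h1
        have h2 := (abs_lt.1 h1).2
        have h3 := hgq x ⟨q2, hq2Q⟩
        rw [h3] at h2
        linarith
      have ht1 : Tendsto (fun k => f (σ₁ (σ₂ k)) q1 (x : Icc (0:ℝ) L)) atTop
          (𝓝 (F₀ q1 x)) := (hpt _ _ (hF₀ q1) x).comp hσ₂.tendsto_atTop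
      have ht2 : Tendsto (fun k => f (σ₁ (σ₂ k)) q2 (x : Icc (0:ℝ) L)) atTop
          (𝓝 (F₀ ⟨q2, hq2Q⟩ x)) := (hpt _ _ (hF₀ ⟨q2, hq2Q⟩) x).comp hσ₂.tendsto_atTop
      have he1 : ∀ᶠ k in atTop, g x t - ε < f (σ₁ (σ₂ k)) q1 (x : Icc (0:ℝ) L) :=
        ht1.eventually (eventually_gt_nhds hv)
      have he2 : ∀ᶠ k in atTop, f (σ₁ (σ₂ k)) q2 (x : Icc (0:ℝ) L) < g x t + ε :=
        ht2.eventually (eventually_lt_nhds hub)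
      obtain ⟨N, hN⟩ := eventually_atTop.1 (he1.and he2)
      refine ⟨N, fun k hk => ?_⟩
      obtain ⟨hk1, hk2⟩ := hN k hk
      have hm1 : f (σ₁ (σ₂ k)) q1 (x : Icc (0:ℝ) L) ≤ f (σ₁ (σ₂ k)) t x :=
        hmono _ q1 t (hQsub q1.2).1 hq1le ht.2 x
      have hm2 : f (σ₁ (σ₂ k)) t (x : Icc (0:ℝ) L) ≤ f (σ₁ (σ₂ k)) q2 x :=
        hmono _ t q2 ht.1 hq2l.le (hQsub hq2Q).2 x
      rw [Real.dist_eq, abs_lt]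
      constructor <;> linarith
  have hconvC : ∀ t ∈ Icc (0:ℝ) T, ∃ G : C(Icc (0:ℝ) L, ℝ),
      Tendsto (fun k => f (σ₁ (σ₂ k)) t) atTop (𝓝 G) := by
    intro t ht
    refine lim_of_dense X0 hX0d _ (fun ε hε => ?_) (fun x hx => ?_)
    · obtain ⟨δ, hδ, hδ'⟩ := hequi ε hε
      exact ⟨δ, hδ, fun k => hδ' (σ₁ (σ₂ k)) t ht⟩
    · obtain ⟨l, hl⟩ := hptconv t ht ⟨x, hx⟩
      exact hl.cauchySeq
  set F : ℝ → C(Icc (0:ℝ) L, ℝ) := fun t =>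
    if h : t ∈ Icc (0:ℝ) T then (hconvC t h).choose else f 0 0 with hFdef
  have hF : ∀ t ∈ Icc (0:ℝ) T,
      Tendsto (fun k => f (σ₁ (σ₂ k)) t) atTop (𝓝 (F t)) := by
    intro t ht
    rw [hFdef]
    simp only [dif_pos ht]
    exact (hconvC t ht).choose_spec
  refine ⟨F, ?_, hF, ?_⟩
  · intro s t hs hst htT x
    exact le_of_tendsto_of_tendsto' (hpt _ _ (hF s ⟨hs, hst.trans htT⟩) x)
      (hpt _ _ (hF t ⟨hs.trans hst, htT⟩) x)
      (fun k => hmono _ s t hs hst htT x)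
  · intro ε hε
    obtain ⟨δ, hδ, hδ'⟩ := hequi (ε/2) (by positivity)
    refine ⟨δ, hδ, fun t ht x y hxy => ?_⟩
    have h1 : Tendsto (fun k => |f (σ₁ (σ₂ k)) t x - f (σ₁ (σ₂ k)) t y|) atTop
        (𝓝 |F t x - F t y|) :=
      ((hpt _ _ (hF t ht) x).sub (hpt _ _ (hF t ht) y)).abs
    have h2 : |F t x - F t y| ≤ ε/2 :=
      le_of_tendsto h1 (Eventually.of_forall fun k => (hδ' _ t ht x y hxy).le)
    linarith
end

section
/- Let (X, ‖·‖) be a normed space, let f : [a,b] → X be a bounded measurable function, and let g ∈ L¹(a,b) be nonnegative. Assume that for every a ≤ s ≤ t ≤ b one has ‖f(t) − f(s)‖² ≤ ∫ₛᵗ ‖f(t) − f(τ)‖ g(τ) dτ. Then for every a ≤ s ≤ t ≤ b it holds ‖f(t) − f(s)‖ ≤ ∫ₛᵗ g(τ) dτ. -/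
open Set MeasureTheory

/-- Gronwall-type lemma: if a bounded measurable `f : [a,b] → X` satisfies
`‖f(t) − f(s)‖² ≤ ∫ₛᵗ ‖f(t) − f(τ)‖ g(τ) dτ` for all `a ≤ s ≤ t ≤ b`, with `g ∈ L¹(a,b)`
nonnegative, then `‖f(t) − f(s)‖ ≤ ∫ₛᵗ g(τ) dτ`. -/
theorem stmt_6
    {X : Type*} [NormedAddCommGroup X] [NormedSpace ℝ X]
    [MeasurableSpace X] [BorelSpace X]
    (a b : ℝ) (hab : a ≤ b)
    (f : ℝ → X) (hf_meas : Measurable f)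
    (hf_bdd : ∃ C : ℝ, ∀ t ∈ Icc a b, ‖f t‖ ≤ C)
    (g : ℝ → ℝ) (hg_int : IntegrableOn g (Icc a b))
    (hg_nonneg : ∀ τ ∈ Icc a b, 0 ≤ g τ)
    (hineq : ∀ s t : ℝ, a ≤ s → s ≤ t → t ≤ b →
      ‖f t - f s‖ ^ 2 ≤ ∫ τ in s..t, ‖f t - f τ‖ * g τ) :
    ∀ s t : ℝ, a ≤ s → s ≤ t → t ≤ b → ‖f t - f s‖ ≤ ∫ τ in s..t, g τ := by
  intro s t hs hst htb
  have hat : a ≤ t := hs.trans hst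
  -- bound M
  obtain ⟨C, hC⟩ := hf_bdd
  set M : ℝ := 2 * C with hMdef
  have hM0 : 0 ≤ M := by
    have := hC a ⟨le_refl a, hab⟩
    have h0 : (0:ℝ) ≤ C := (norm_nonneg _).trans this
    positivity
  have hφle : ∀ τ, a ≤ τ → τ ≤ b → ‖f t - f τ‖ ≤ M := by
    intro τ h1 h2
    calc ‖f t - f τ‖ ≤ ‖f t‖ + ‖f τ‖ := norm_sub_le _ _
      _ ≤ C + C := add_le_add (hC t ⟨hat, htb⟩) (hC τ ⟨h1, h2⟩)
      _ = M := by ring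
  -- measurability of φ
  have hφmeas : Measurable fun τ => ‖f t - f τ‖ :=
    (((continuous_const.sub continuous_id).measurable).comp hf_meas).norm
  -- interval integrability of g on subintervals
  have hgint : ∀ u v, a ≤ u → u ≤ v → v ≤ b → IntervalIntegrable g volume u v := by
    intro u v h1 h2 h3
    exact (hg_int.mono_set (by rw [uIcc_of_le h2]; exact Icc_subset_Icc h1 h3)).intervalIntegrable
  have hGnonneg : ∀ u, a ≤ u → u ≤ t → 0 ≤ ∫ τ in u..t, g τ := by
    intro u h1 h2
    exact intervalIntegral.integral_nonneg h2
      (fun τ hτ => hg_nonneg τ ⟨h1.trans hτ.1, hτ.2.trans htb⟩)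
  have hGmono : ∀ u v, a ≤ u → u ≤ v → v ≤ t →
      (∫ τ in v..t, g τ) ≤ ∫ τ in u..t, g τ := by
    intro u v h1 h2 h3
    have hadd := intervalIntegral.integral_add_adjacent_intervals
      (hgint u v h1 h2 (h3.trans htb)) (hgint v t (h1.trans h2) h3 htb)
    have hnn : 0 ≤ ∫ τ in u..v, g τ := intervalIntegral.integral_nonneg h2
      (fun τ hτ => hg_nonneg τ ⟨h1.trans hτ.1, hτ.2.trans (h3.trans htb)⟩)
    linarith [hadd]
  -- integrability of φ * g
  have hφgint : ∀ u, a ≤ u → u ≤ t →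
      IntervalIntegrable (fun τ => ‖f t - f τ‖ * g τ) volume u t := by
    intro u h1 h2
    have hsub : Icc u t ⊆ Icc a b := Icc_subset_Icc h1 htb
    have hgI : IntegrableOn g (Icc u t) := hg_int.mono_set hsub
    have hMg : IntegrableOn (fun τ => M * g τ) (Icc u t) := hgI.const_mul M
    have : IntegrableOn (fun τ => ‖f t - f τ‖ * g τ) (Icc u t) := by
      refine Integrable.mono hMg ((hφmeas.aestronglyMeasurable.mul hgI.aestronglyMeasurable)) ?_
      refine (ae_restrict_iff' measurableSet_Icc).2 (ae_of_all _ fun τ hτ => ?_)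
      have hb1 : ‖f t - f τ‖ ≤ M := hφle τ ((hsub hτ).1) ((hsub hτ).2)
      have : |‖f t - f τ‖ * g τ| = ‖f t - f τ‖ * |g τ| := by
        rw [abs_mul, abs_of_nonneg (norm_nonneg _)]
      rw [Real.norm_eq_abs, Real.norm_eq_abs, this, abs_mul, abs_of_nonneg hM0]
      exact mul_le_mul_of_nonneg_right hb1 (abs_nonneg _)
    rw [← uIcc_of_le h2] at this
    exact this.intervalIntegrable
  -- main induction
  have key : ∀ n : ℕ, ∀ u, a ≤ u → u ≤ t →
      ‖f t - f u‖ ≤ M ^ ((1/2:ℝ)^n) * (∫ τ in u..t, g τ) ^ (1 - (1/2:ℝ)^n) := by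
    intro n
    induction n with
    | zero =>
      intro u h1 h2
      simp only [pow_zero, Real.rpow_one, sub_self, Real.rpow_zero, mul_one]
      exact hφle u h1 (h2.trans htb)
    | succ n ih =>
      intro u h1 h2
      set e : ℝ := (1/2:ℝ)^n with he_def
      have he_pos : 0 < e := by positivity
      have he_le1 : e ≤ 1 := pow_le_one₀ (by norm_num) (by norm_num)
      set G : ℝ := ∫ τ in u..t, g τ with hG_def
      have hG0 : 0 ≤ G := hGnonneg u h1 h2
      have step1 : ‖f t - f u‖ ^ 2 ≤ M ^ e * G ^ (2 - e) := by
        calc ‖f t - f u‖ ^ 2 ≤ ∫ τ in u..t, ‖f t - f τ‖ * g τ := hineq u t h1 h2 htb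
          _ ≤ ∫ τ in u..t, (M ^ e * G ^ (1 - e)) * g τ := by
              refine intervalIntegral.integral_mono_on h2 (hφgint u h1 h2)
                ((hgint u t h1 h2 htb).const_mul _) (fun τ hτ => ?_)
              have haτ : a ≤ τ := h1.trans hτ.1
              have hφτ := ih τ haτ hτ.2
              have hGτ : (∫ τ' in τ..t, g τ') ^ (1 - e) ≤ G ^ (1 - e) :=
                Real.rpow_le_rpow (hGnonneg τ haτ hτ.2)
                  (hGmono u τ h1 hτ.1 hτ.2) (by linarith)
              have : ‖f t - f τ‖ ≤ M ^ e * G ^ (1 - e) :=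
                hφτ.trans (mul_le_mul_of_nonneg_left hGτ (Real.rpow_nonneg hM0 _))
              exact mul_le_mul_of_nonneg_right this
                (hg_nonneg τ ⟨haτ, hτ.2.trans htb⟩)
          _ = (M ^ e * G ^ (1 - e)) * G := intervalIntegral.integral_const_mul _ _
          _ = M ^ e * G ^ (2 - e) := by
              rw [mul_assoc]
              congr 1
              rw [show (2:ℝ) - e = (1 - e) + 1 by ring,
                Real.rpow_add' hG0 (by intro h; nlinarith), Real.rpow_one]
      have hB0 : 0 ≤ M ^ ((1/2:ℝ)^(n+1)) * G ^ (1 - (1/2:ℝ)^(n+1)) := by positivity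
      have hsq : (M ^ ((1/2:ℝ)^(n+1)) * G ^ (1 - (1/2:ℝ)^(n+1))) ^ 2
          = M ^ e * G ^ (2 - e) := by
        have hen : ((1/2:ℝ)^(n+1)) = e / 2 := by rw [he_def]; ring
        rw [hen, mul_pow, pow_two, pow_two,
          ← Real.rpow_add' hM0 (by intro h; nlinarith),
          ← Real.rpow_add' hG0 (by intro h; nlinarith),
          show e/2 + e/2 = e by ring, show 1 - e/2 + (1 - e/2) = 2 - e by ring]
      have := Real.sqrt_le_sqrt (hsq ▸ step1)
      rwa [Real.sqrt_sq (norm_nonneg _), Real.sqrt_sq hB0] at this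
  -- pass to the limit
  set G : ℝ := ∫ τ in s..t, g τ with hG_def
  have hG0 : 0 ≤ G := hGnonneg s hs hst
  by_cases hM : M = 0
  · have h1 := key 1 s hs hst
    rw [hM, Real.zero_rpow (by norm_num : ((1:ℝ)/2)^1 ≠ 0), zero_mul] at h1
    linarith
  · by_cases hG : G = 0
    · have h1 := key 1 s hs hst
      rw [← hG_def] at h1
      simp only [pow_one, hG] at h1
      rw [Real.zero_rpow (by norm_num : (1:ℝ) - 1/2 ≠ 0), mul_zero] at h1
      linarith
    · -- M > 0, G > 0 : take limit
      have he : Filter.Tendsto (fun n : ℕ => ((1:ℝ)/2)^n) Filter.atTop (nhds 0) :=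
        tendsto_pow_atTop_nhds_zero_of_lt_one (by norm_num) (by norm_num)
      have h1 : Filter.Tendsto (fun n : ℕ => M ^ ((1/2:ℝ)^n)) Filter.atTop
          (nhds (M ^ (0:ℝ))) :=
        Filter.Tendsto.rpow tendsto_const_nhds he (Or.inl hM)
      have h2 : Filter.Tendsto (fun n : ℕ => G ^ (1 - (1/2:ℝ)^n)) Filter.atTop
          (nhds (G ^ (1:ℝ))) := by
        have : Filter.Tendsto (fun n : ℕ => 1 - ((1:ℝ)/2)^n) Filter.atTop (nhds 1) := by
          simpa using (tendsto_const_nhds.sub he)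
        exact Filter.Tendsto.rpow tendsto_const_nhds this (Or.inl hG)
      have hlim : Filter.Tendsto
          (fun n : ℕ => M ^ ((1/2:ℝ)^n) * G ^ (1 - (1/2:ℝ)^n)) Filter.atTop (nhds G) := by
        have := h1.mul h2
        simpa [Real.rpow_zero, Real.rpow_one] using this
      exact ge_of_tendsto' hlim (fun n => key n s hs hst)
end

section
/- Let E : [0,1] → ℝ be twice continuously differentiable with E''(α) > 0 for every α ∈ [0,1], and set m := min_{α∈[0,1]} ( (1/2)E''(α)E(α) − E'(α)² ) and M := max_{α∈[0,1]} E''(α). Assume m > 0. Then for every α ∈ [0,1] and every v, x, y ∈ ℝ one has (1/2)E''(α)v²x² + 2E'(α)v·x·y + E(α)y² ≥ 2(m/M)·y². -/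
open Set

/-- Lower bound for the quadratic form of the Hessian of `(α,v) ↦ (1/2)E(α)v²`:
for a hardening material (`(1/2)E''E − (E')² > 0`, `E'' > 0`) with
`m = min((1/2)E''E − (E')²)` and `M = max E''` one has
`(1/2)E''(α)v²x² + 2E'(α)vxy + E(α)y² ≥ 2(m/M)y²`. -/
theorem stmt_8
    (E E' E'' : ℝ → ℝ)
    -- E is C² on [0,1] with first and second derivatives E', E''
    (hE' : ∀ α ∈ Icc (0:ℝ) 1, HasDerivWithinAt E (E' α) (Icc 0 1) α)
    (hE'' : ∀ α ∈ Icc (0:ℝ) 1, HasDerivWithinAt E' (E'' α) (Icc 0 1) α)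
    (hE''cont : ContinuousOn E'' (Icc 0 1))
    (hE''pos : ∀ α ∈ Icc (0:ℝ) 1, 0 < E'' α)
    (m M : ℝ)
    (hm : m = sInf ((fun α => (1/2) * E'' α * E α - (E' α) ^ 2) '' Icc (0:ℝ) 1))
    (hM : M = sSup (E'' '' Icc (0:ℝ) 1))
    (hmpos : 0 < m) :
    ∀ α ∈ Icc (0:ℝ) 1, ∀ v x y : ℝ,
      2 * (m / M) * y ^ 2 ≤
        (1/2) * E'' α * v ^ 2 * x ^ 2 + 2 * E' α * v * x * y + E α * y ^ 2 := by
  intro α hα v x y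
  have hEcont : ContinuousOn E (Icc 0 1) := fun a ha =>
    ((hE' a ha).continuousWithinAt)
  have hE'cont : ContinuousOn E' (Icc 0 1) := fun a ha =>
    ((hE'' a ha).continuousWithinAt)
  have hfcont : ContinuousOn (fun a => (1/2) * E'' a * E a - (E' a) ^ 2) (Icc (0:ℝ) 1) := by
    exact ((continuousOn_const.mul hE''cont).mul hEcont).sub (hE'cont.pow 2)
  -- m ≤ f(α)
  have hcompact : IsCompact (Icc (0:ℝ) 1) := isCompact_Icc
  have hbddf : BddBelow ((fun a => (1/2) * E'' a * E a - (E' a) ^ 2) '' Icc (0:ℝ) 1) :=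
    (hcompact.image_of_continuousOn hfcont).bddBelow
  have hmle : m ≤ (1/2) * E'' α * E α - (E' α) ^ 2 := by
    rw [hm]; exact csInf_le hbddf ⟨α, hα, rfl⟩
  have hbddM : BddAbove (E'' '' Icc (0:ℝ) 1) :=
    (hcompact.image_of_continuousOn hE''cont).bddAbove
  have hMge : E'' α ≤ M := by
    rw [hM]; exact le_csSup hbddM ⟨α, hα, rfl⟩
  have hEpos := hE''pos α hα
  have hMpos : 0 < M := lt_of_lt_of_le hEpos hMge
  -- m/M ≤ m/E''α
  have h1 : m / M ≤ m / E'' α := div_le_div_of_nonneg_left hmpos.le hEpos hMge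
  have h2 : 2 * (m / E'' α) * y ^ 2 ≤
      (1/2) * E'' α * v ^ 2 * x ^ 2 + 2 * E' α * v * x * y + E α * y ^ 2 := by
    have key : 2 * m * y ^ 2 ≤
        ((1/2) * E'' α * v ^ 2 * x ^ 2 + 2 * E' α * v * x * y + E α * y ^ 2) * E'' α := by
      nlinarith [sq_nonneg ((1/2) * E'' α * (v * x) + E' α * y), sq_nonneg y, sq_nonneg (v*x)]
    calc 2 * (m / E'' α) * y ^ 2 = (2 * m * y ^ 2) / E'' α := by ring
      _ ≤ _ := by rw [div_le_iff₀ hEpos]; linarith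
  calc 2 * (m / M) * y ^ 2 ≤ 2 * (m / E'' α) * y ^ 2 := by
        nlinarith [sq_nonneg y]
    _ ≤ _ := h2
end

section
/- Let φ : 𝒯 → [0,∞) and λ > 0. Assume that ψ(z) := φ(z,z) is continuously differentiable on [0,∞) and λ-convex, i.e. ψ(θz^a + (1−θ)z^b) ≤ θψ(z^a) + (1−θ)ψ(z^b) + (λ/2)θ(1−θ)|z^a − z^b|² for all θ ∈ [0,1] and z^a, z^b ≥ 0; that for every z > 0 the map y ↦ φ(y,z) is continuously differentiable and convex on [0,z]; and that ∂_yφ(z,z) = ψ'(z) for every z > 0. Then for every z ≥ 0 the function y ↦ φ(y, max(z,y)) is λ-convex on [0,∞). -/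
open Set

/-- A quadratic derivative fact. -/
lemma stmt_9_quad (lam x : ℝ) : HasDerivAt (fun w : ℝ => lam / 2 * w ^ 2) (lam * x) x := by
  have h := (hasDerivAt_pow 2 x).const_mul (lam / 2)
  refine h.congr_deriv ?_
  push_cast
  ring

/-- A convex function with a derivative within `S` has monotone derivative on `S`. -/
lemma stmt_9_mono {S : Set ℝ} {f f' : ℝ → ℝ} (hfc : ConvexOn ℝ S f)
    (hfd : ∀ x ∈ S, HasDerivWithinAt f (f' x) S x) : MonotoneOn f' S := by
  intro x hx y hy hxy
  rcases eq_or_lt_of_le hxy with rfl | h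
  · exact le_rfl
  · exact (hfc.le_slope_of_hasDerivWithinAt hx hy h (hfd x hx)).trans
      (hfc.slope_le_of_hasDerivWithinAt hx hy h (hfd y hy))

/-- If `ψ(z) = φ(z,z)` is `λ`-convex and `y ↦ φ(y,z)` is C¹ and convex on `[0,z]` with
`∂_yφ(z,z) = ψ'(z)`, then for every `z ≥ 0` the function `y ↦ φ(y, max(z,y))` is
`λ`-convex on `[0,∞)`. -/
theorem stmt_9
    (φ : ℝ → ℝ → ℝ) (ψ' : ℝ → ℝ) (φy : ℝ → ℝ → ℝ) (lam : ℝ) (hlam : 0 < lam)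
    -- φ maps 𝒯 into [0,∞)
    (hφ_nonneg : ∀ y z : ℝ, 0 ≤ y → y ≤ z → 0 ≤ φ y z)
    -- ψ is C¹ on [0,∞) with derivative ψ'
    (hψ : ∀ z ∈ Ici (0:ℝ), HasDerivWithinAt (fun w => φ w w) (ψ' z) (Ici 0) z)
    (hψ'cont : ContinuousOn ψ' (Ici 0))
    -- ψ is λ-convex on [0,∞)
    (hψlam : ∀ θ ∈ Icc (0:ℝ) 1, ∀ za zb : ℝ, 0 ≤ za → 0 ≤ zb →
      φ (θ * za + (1 - θ) * zb) (θ * za + (1 - θ) * zb) ≤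
        θ * φ za za + (1 - θ) * φ zb zb + (lam / 2) * θ * (1 - θ) * |za - zb| ^ 2)
    -- for every z > 0, y ↦ φ(y,z) is C¹ and convex on [0,z], with derivative φy(·,z)
    (hφy : ∀ z : ℝ, 0 < z → ∀ y ∈ Icc (0:ℝ) z,
      HasDerivWithinAt (fun w => φ w z) (φy y z) (Icc 0 z) y)
    (hφycont : ∀ z : ℝ, 0 < z → ContinuousOn (fun y => φy y z) (Icc 0 z))
    (hconv : ∀ z : ℝ, 0 < z → ConvexOn ℝ (Icc 0 z) (fun y => φ y z))
    -- ∂_yφ(z,z) = ψ'(z) for every z > 0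
    (hdiag : ∀ z : ℝ, 0 < z → φy z z = ψ' z) :
    ∀ z : ℝ, 0 ≤ z → ∀ θ ∈ Icc (0:ℝ) 1, ∀ a b : ℝ, 0 ≤ a → 0 ≤ b →
      φ (θ * a + (1 - θ) * b) (max z (θ * a + (1 - θ) * b)) ≤
        θ * φ a (max z a) + (1 - θ) * φ b (max z b) +
          (lam / 2) * θ * (1 - θ) * |a - b| ^ 2 := by
  intro z hz0 θ hθ a b ha hb
  rcases eq_or_lt_of_le hz0 with rfl | hz
  · -- z = 0 : all maxes reduce and the claim is exactly λ-convexity of ψ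
    have hm : 0 ≤ θ * a + (1 - θ) * b := by
      have := hθ.1; have := hθ.2
      nlinarith
    rw [max_eq_right hm, max_eq_right ha, max_eq_right hb]
    exact hψlam θ hθ a b ha hb
  -- Now z > 0.  Set f y = φ y (max z y) + lam/2 y² and show f is convex on [0,∞).
  set f : ℝ → ℝ := fun y => φ y (max z y) + lam / 2 * y ^ 2 with hf
  -- Ψ := ψ + quadratic is convex on [0,∞)
  have hΨconv : ConvexOn ℝ (Ici 0) (fun w => φ w w + lam / 2 * w ^ 2) := by
    refine ⟨convex_Ici 0, ?_⟩
    intro x hx y hy p q hp hq hpq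
    simp only [smul_eq_mul]
    have h1 := hψlam p ⟨hp, by linarith⟩ x y hx hy
    have hq' : (1 : ℝ) - p = q := by linarith
    rw [hq', sq_abs] at h1
    have hq2 : q = 1 - p := by linarith
    calc φ (p * x + q * y) (p * x + q * y) + lam / 2 * (p * x + q * y) ^ 2
        ≤ (p * φ x x + q * φ y y + lam / 2 * p * q * (x - y) ^ 2)
            + lam / 2 * (p * x + q * y) ^ 2 := by linarith
      _ = p * (φ x x + lam / 2 * x ^ 2) + q * (φ y y + lam / 2 * y ^ 2) := by
            rw [hq2]; ring
  have hΨd : ∀ w ∈ Ici (0:ℝ), HasDerivWithinAt (fun w => φ w w + lam / 2 * w ^ 2)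
      (ψ' w + lam * w) (Ici 0) w := fun w hw =>
    (hψ w hw).add (stmt_9_quad lam w).hasDerivWithinAt
  have hB : MonotoneOn (fun w => ψ' w + lam * w) (Ici 0) := stmt_9_mono hΨconv hΨd
  have hA : MonotoneOn (fun w => φy w z) (Icc 0 z) :=
    stmt_9_mono (hconv z hz) (hφy z hz)
  -- the candidate derivative of f
  set f' : ℝ → ℝ := fun x => (if x ≤ z then φy x z else ψ' x) + lam * x with hf'
  -- f has derivative f' at every x > 0
  have hder : ∀ x ∈ Ioi (0:ℝ), HasDerivAt f (f' x) x := by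
    intro x hx
    rcases lt_trichotomy x z with hxz | hxz | hzx
    · -- x < z : f agrees with φ(·,z)+q near x
      have h1 : HasDerivAt (fun w => φ w z) (φy x z) x :=
        (hφy z hz x ⟨le_of_lt hx, hxz.le⟩).hasDerivAt (Icc_mem_nhds hx hxz)
      have h2 := h1.add (stmt_9_quad lam x)
      have heq : f =ᶠ[nhds x] fun w => φ w z + lam / 2 * w ^ 2 := by
        filter_upwards [Iio_mem_nhds hxz] with y hy
        simp [hf, max_eq_left (le_of_lt (mem_Iio.mp hy))]
      have := h2.congr_of_eventuallyEq heq
      simpa [hf', if_pos hxz.le] using this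
    · -- x = z : glue the two one-sided derivatives
      subst hxz
      have hL0 : HasDerivWithinAt (fun w => φ w x) (φy x x) (Icc 0 x) x :=
        hφy x hz x ⟨hz.le, le_refl x⟩
      have hmem : Icc (0:ℝ) x ∈ nhdsWithin x (Iic x) := by
        rw [← Ici_inter_Iic]
        exact Filter.inter_mem (mem_nhdsWithin_of_mem_nhds (Ici_mem_nhds hz))
          self_mem_nhdsWithin
      have hL1 : HasDerivWithinAt (fun w => φ w x + lam / 2 * w ^ 2)
          (φy x x + lam * x) (Iic x) x :=
        (hL0.mono_of_mem_nhdsWithin hmem).add (stmt_9_quad lam x).hasDerivWithinAt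
      have hL : HasDerivWithinAt f (φy x x + lam * x) (Iic x) x := by
        refine hL1.congr (fun y hy => ?_) ?_
        · simp [hf, max_eq_left (mem_Iic.mp hy)]
        · simp [hf]
      have hR1 : HasDerivWithinAt (fun w => φ w w + lam / 2 * w ^ 2)
          (ψ' x + lam * x) (Ici x) x :=
        ((hψ x hz.le).mono (Ici_subset_Ici.mpr hz.le)).add
          (stmt_9_quad lam x).hasDerivWithinAt
      have hR : HasDerivWithinAt f (ψ' x + lam * x) (Ici x) x := by
        refine hR1.congr (fun y hy => ?_) ?_
        · simp [hf, max_eq_right (mem_Ici.mp hy)]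
        · simp [hf]
      rw [← hdiag x hz] at hR
      have hU := hL.union hR
      rw [Iic_union_Ici, hasDerivWithinAt_univ] at hU
      simpa [hf', if_pos (le_refl x)] using hU
    · -- x > z : f agrees with ψ+q near x
      have h1 : HasDerivAt (fun w => φ w w) (ψ' x) x :=
        (hψ x (hz.trans hzx).le).hasDerivAt (Ici_mem_nhds (hz.trans hzx))
      have h2 := h1.add (stmt_9_quad lam x)
      have heq : f =ᶠ[nhds x] fun w => φ w w + lam / 2 * w ^ 2 := by
        filter_upwards [Ioi_mem_nhds hzx] with y hy
        simp [hf, max_eq_right (le_of_lt (mem_Ioi.mp hy))]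
      have := h2.congr_of_eventuallyEq heq
      simpa [hf', if_neg (not_le.mpr hzx)] using this
  -- f is continuous on [0,∞)
  have hcont : ContinuousOn f (Ici 0) := by
    intro x hx
    rcases eq_or_lt_of_le (mem_Ici.mp hx : (0:ℝ) ≤ x) with rfl | hx'
    · have h0 : ContinuousWithinAt (fun w => φ w z + lam / 2 * w ^ 2) (Icc 0 z) 0 :=
        ((hφy z hz 0 ⟨le_refl 0, hz.le⟩).continuousWithinAt).add
          (stmt_9_quad lam 0).continuousAt.continuousWithinAt
      have h1 : ContinuousWithinAt f (Icc 0 z) 0 := by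
        refine h0.congr (fun y hy => ?_) ?_
        · simp [hf, max_eq_left hy.2]
        · simp [hf, max_eq_left hz.le]
      refine h1.mono_of_mem_nhdsWithin ?_
      have : Ici (0:ℝ) ∩ Iio z ⊆ Icc 0 z := fun y hy => ⟨hy.1, hy.2.le⟩
      exact Filter.mem_of_superset
        (Filter.inter_mem self_mem_nhdsWithin
          (mem_nhdsWithin_of_mem_nhds (Iio_mem_nhds hz))) this
    · exact (hder x hx').continuousAt.continuousWithinAt
  -- f' is monotone on (0,∞)
  have hmono : MonotoneOn f' (Ioi 0) := by
    intro x hx y hy hxy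
    simp only [hf']
    have hlx : lam * x ≤ lam * y := mul_le_mul_of_nonneg_left hxy hlam.le
    by_cases hxz : x ≤ z
    · by_cases hyz : y ≤ z
      · rw [if_pos hxz, if_pos hyz]
        have h1 : φy x z ≤ φy y z :=
          hA ⟨le_of_lt hx, hxz⟩ ⟨(le_of_lt hx).trans hxy, hyz⟩ hxy
        linarith
      · rw [if_pos hxz, if_neg hyz]
        push_neg at hyz
        have h1 : φy x z ≤ φy z z := hA ⟨le_of_lt hx, hxz⟩ ⟨hz.le, le_refl z⟩ hxz
        have h2 : ψ' z + lam * z ≤ ψ' y + lam * y := hB hz.le (hz.trans hyz).le hyz.le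
        have h3 : lam * x ≤ lam * z := mul_le_mul_of_nonneg_left hxz hlam.le
        rw [hdiag z hz] at h1
        linarith
    · push_neg at hxz
      rw [if_neg (not_le.mpr hxz), if_neg (not_le.mpr (hxz.trans_le hxy))]
      have h4 : ψ' x + lam * x ≤ ψ' y + lam * y :=
        hB (hz.trans hxz).le ((hz.trans hxz).trans_le hxy).le hxy
      linarith
  -- conclude f is convex on [0,∞)
  have hconvf : ConvexOn ℝ (Ici 0) f := by
    refine MonotoneOn.convexOn_of_deriv (convex_Ici 0) hcont ?_ ?_
    · rw [interior_Ici]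
      exact fun x hx => (hder x hx).differentiableAt.differentiableWithinAt
    · rw [interior_Ici]
      intro x hx y hy hxy
      rw [(hder x hx).deriv, (hder y hy).deriv]
      exact hmono hx hy hxy
  -- extract the λ-convexity inequality
  have h1θ : 0 ≤ 1 - θ := by linarith [hθ.2]
  have key := hconvf.2 (ha : a ∈ Ici 0) (hb : b ∈ Ici 0) hθ.1 h1θ (by ring)
  simp only [smul_eq_mul, hf] at key
  rw [sq_abs]
  nlinarith [key]
end
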